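/- Let a, b, c ∈ ℂ and define the mixed polynomial f : ℂ → ℂ by f(z) = a z² + b z z̄ + c z̄². Then f has no critical point, as a map ℝ² → ℝ², in ℂ \ {0} (i.e. Sing f ∩ (ℂ \ {0}) = ∅, which for (a,b,c) ≠ (0,0,0) is exactly the Newton strong non-degeneracy of f) if and only if (|a|² − |c|²)² > |ā·b − c·b̄|². -/

import Mathlib

open Complex Filter Finset

noncomputable section

abbrev MixedCoeff (n : ℕ) := ((Fin n → ℕ) × (Fin n → ℕ)) →₀ ℂ

namespace Mixed

variable {n : ℕ}

/-- Evaluation of a mixed polynomial given by its coefficient function `c`: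
`f(z) = Σ c(ν,μ) zᵛ z̄ᵘ`. -/
def eval (c : MixedCoeff n) (z : Fin n → ℂ) : ℂ :=
  c.sum fun p a => a * (∏ i, z i ^ p.1 i) * ∏ i, (starRingEnd ℂ) (z i) ^ p.2 i

/-- `∂f/∂z_i` evaluated at `(z, z̄)`. -/
def dz (c : MixedCoeff n) (i : Fin n) (z : Fin n → ℂ) : ℂ :=
  c.sum fun p a => a * (p.1 i) * (∏ j, z j ^ (p.1 j - if j = i then 1 else 0)) *
    ∏ j, (starRingEnd ℂ) (z j) ^ p.2 j

/-- `∂f/∂z̄_i` evaluated at `(z, z̄)`. -/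
def dzbar (c : MixedCoeff n) (i : Fin n) (z : Fin n → ℂ) : ℂ :=
  c.sum fun p a => a * (p.2 i) * (∏ j, z j ^ p.1 j) *
    ∏ j, (starRingEnd ℂ) (z j) ^ (p.2 j - if j = i then 1 else 0)

/-- The singular locus of `f` as a real map `ℝ²ⁿ → ℝ²`. -/
def Sing (c : MixedCoeff n) : Set (Fin n → ℂ) :=
  {z | ¬ Function.Surjective ⇑(fderiv ℝ (eval c) z)}

/-- The Milnor set `M(f)`. -/
def Milnor (c : MixedCoeff n) : Set (Fin n → ℂ) :=
  {z | ∃ (l : ℝ) (m : ℂ), m ≠ 0 ∧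
    ∀ i, (l : ℂ) * z i = m * (starRingEnd ℂ) (dz c i z) + (starRingEnd ℂ) m * dzbar c i z}

/-- The set `S(f)` of asymptotic ρ-nonregular values. -/
def Sset (c : MixedCoeff n) : Set ℂ :=
  {v | ∃ zk : ℕ → (Fin n → ℂ), (∀ k, zk k ∈ Milnor c) ∧
    Tendsto (fun k => ‖zk k‖) atTop atTop ∧
    Tendsto (fun k => eval c (zk k)) atTop (nhds v)}

/-- The point of `ℝⁿ` attached to the exponent pair `(ν,μ)`, namely `ν+μ`. -/
def suppPt (p : (Fin n → ℕ) × (Fin n → ℕ)) : Fin n → ℝ := fun i => ((p.1 i + p.2 i : ℕ) : ℝ)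

/-- The support of `f`, as a subset of `ℝⁿ`. -/
def suppPts (c : MixedCoeff n) : Set (Fin n → ℝ) := suppPt '' (c.support : Set _)

/-- The Newton polyhedron `Γ₀(f)`: convex hull of `{0} ∪ supp(f)`. -/
def Gamma0 (c : MixedCoeff n) : Set (Fin n → ℝ) := convexHull ℝ (insert 0 (suppPts c))

/-- `supp(f)‾`: the convex hull of `supp(f) \ {0}`. -/
def suppBar (c : MixedCoeff n) : Set (Fin n → ℝ) := convexHull ℝ (suppPts c \ {0})

/-- `F` is a face of the (compact convex) set `C`: either `C` itself or the set of
minimizers on `C` of a linear functional, and nonempty. -/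
def IsFaceOf (C F : Set (Fin n → ℝ)) : Prop :=
  F.Nonempty ∧ (F = C ∨ ∃ a : Fin n → ℝ,
    F = {x ∈ C | ∀ y ∈ C, ∑ i, a i * x i ≤ ∑ i, a i * y i})

/-- `Δ` is a face of the Newton boundary at infinity `Γ⁺(f)`: a face of `Γ₀(f)` not
containing the origin. -/
def IsGammaPlusFace (c : MixedCoeff n) (Δ : Set (Fin n → ℝ)) : Prop :=
  IsFaceOf (Gamma0 c) Δ ∧ (0 : Fin n → ℝ) ∉ Δ

/-- `Γ⁺(f)` as a subset of `ℝⁿ`: the union of the faces of `Γ₀(f)` not containing `0`. -/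
def GammaPlusSet (c : MixedCoeff n) : Set (Fin n → ℝ) :=
  {x | ∃ Δ, IsGammaPlusFace c Δ ∧ x ∈ Δ}

/-- The truncation `f_Δ` of `f` to a subset `Δ ⊆ ℝⁿ`. -/
def trunc (c : MixedCoeff n) (Δ : Set (Fin n → ℝ)) : MixedCoeff n :=
  @Finsupp.filter _ _ _ (fun p => suppPt p ∈ Δ) (Classical.decPred _) c

/-- Newton non-degeneracy: for every face `Δ` of `Γ⁺(f)`,
`Sing f_Δ ∩ f_Δ⁻¹(0) ∩ (ℂ*)ⁿ = ∅`. -/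
def NewtonNonDeg (c : MixedCoeff n) : Prop :=
  ∀ Δ, IsGammaPlusFace c Δ → ∀ z : Fin n → ℂ, (∀ i, z i ≠ 0) →
    eval (trunc c Δ) z = 0 → z ∉ Sing (trunc c Δ)

/-- Newton strong non-degeneracy: for every face `Δ` of `Γ⁺(f)`,
`Sing f_Δ ∩ (ℂ*)ⁿ = ∅`. -/
def NewtonStronglyNonDeg (c : MixedCoeff n) : Prop :=
  ∀ Δ, IsGammaPlusFace c Δ → ∀ z : Fin n → ℂ, (∀ i, z i ≠ 0) →
    z ∉ Sing (trunc c Δ)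

/-- `Δ` is a bad face of `supp(f)‾`. -/
def IsBadFace (c : MixedCoeff n) (Δ : Set (Fin n → ℝ)) : Prop :=
  IsFaceOf (suppBar c) Δ ∧ (0 : Fin n → ℝ) ∈ affineSpan ℝ Δ ∧
    ∃ a : Fin n → ℝ, (∃ i, a i < 0) ∧ (∃ j, 0 < a j) ∧
      {x ∈ suppBar c | ∑ i, a i * x i = 0} = Δ

/-- `f` depends effectively on all its variables. -/
def EffectiveAll (c : MixedCoeff n) : Prop :=
  ∀ i, ∃ p ∈ c.support, 0 < p.1 i + p.2 i

/-- The Euclidean norm on `ℂⁿ`. -/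
def norm2 (v : Fin n → ℂ) : ℝ := Real.sqrt (∑ i, Complex.normSq (v i))

end Mixed


lemma surj_iff (A B : ℂ) :
    Function.Surjective (fun h : ℂ => A * h + B * (starRingEnd ℂ) h) ↔
    Complex.normSq A ≠ Complex.normSq B := by
  constructor
  · intro hs heq
    have key : ∀ h : ℂ, (starRingEnd ℂ) A * (A * h + B * (starRingEnd ℂ) h)
        = B * (starRingEnd ℂ) (A * h + B * (starRingEnd ℂ) h) := by
      intro h
      have e1 : A * (starRingEnd ℂ) A = (normSq A : ℂ) := Complex.mul_conj A
      have e2 : B * (starRingEnd ℂ) B = (normSq B : ℂ) := Complex.mul_conj B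
      simp only [map_add, map_mul, Complex.conj_conj]
      rw [show (normSq A : ℂ) = (normSq B : ℂ) by rw [heq]] at e1
      linear_combination h * e1 - h * e2
    obtain ⟨h₁, hh₁⟩ := hs 1
    obtain ⟨h₂, hh₂⟩ := hs Complex.I
    have hh₁' : A * h₁ + B * (starRingEnd ℂ) h₁ = 1 := hh₁
    have hh₂' : A * h₂ + B * (starRingEnd ℂ) h₂ = Complex.I := hh₂
    have k1 := key h₁
    have k2 := key h₂
    rw [hh₁'] at k1
    rw [hh₂'] at k2
    simp at k1 k2
    -- k1 : conj A = B, k2 : conj A * I = B * conj I = -B*I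
    have h2 : (starRingEnd ℂ) A = -B :=
      mul_right_cancel₀ Complex.I_ne_zero (by linear_combination k2)
    have hB : B = 0 := by linear_combination (h2 - k1) / 2
    have hA : A = 0 := by
      have := k1
      rw [hB] at this
      simpa using congrArg (starRingEnd ℂ) this
    rw [hA, hB] at hh₁'
    simp at hh₁'
  · intro hne v
    have hd0 : ((normSq A - normSq B : ℝ) : ℂ) ≠ 0 := by
      simpa [sub_eq_zero] using hne
    refine ⟨((starRingEnd ℂ) A * v - B * (starRingEnd ℂ) v) / ((normSq A - normSq B : ℝ) : ℂ), ?_⟩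
    have hc : (starRingEnd ℂ) (((starRingEnd ℂ) A * v - B * (starRingEnd ℂ) v)
          / ((normSq A - normSq B : ℝ) : ℂ))
        = (A * (starRingEnd ℂ) v - (starRingEnd ℂ) B * v) / ((normSq A - normSq B : ℝ) : ℂ) := by
      simp [map_div₀, map_sub, map_mul, Complex.conj_conj, Complex.conj_ofReal]
    show A * _ + B * _ = v
    rw [hc, ← mul_div_assoc, ← mul_div_assoc, ← add_div, div_eq_iff hd0]
    push_cast
    linear_combination v * Complex.mul_conj A - v * Complex.mul_conj B


lemma normSq_diff (a b c z : ℂ) :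
    normSq (2*a*z + b*(starRingEnd ℂ) z) - normSq (b*z + 2*c*(starRingEnd ℂ) z)
      = 4 * ((normSq a - normSq c) * normSq z
          + ((a * (starRingEnd ℂ) b - b * (starRingEnd ℂ) c) * z^2).re) := by
  simp only [Complex.normSq_apply, Complex.mul_re, Complex.mul_im, Complex.add_re,
    Complex.add_im, Complex.sub_re, Complex.sub_im, Complex.conj_re, Complex.conj_im,
    pow_two, Complex.re_ofNat, Complex.im_ofNat]
  ring

lemma scalar_iff (a b c : ℂ) :
    (∀ z : ℂ, z ≠ 0 → normSq (2*a*z + b*(starRingEnd ℂ) z) ≠ normSq (b*z + 2*c*(starRingEnd ℂ) z)) ↔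
    (normSq a - normSq c) ^ 2 > normSq ((starRingEnd ℂ) a * b - c * (starRingEnd ℂ) b) := by
  set D : ℝ := normSq a - normSq c with hD
  set E : ℂ := a * (starRingEnd ℂ) b - b * (starRingEnd ℂ) c with hE
  have hEeq : normSq ((starRingEnd ℂ) a * b - c * (starRingEnd ℂ) b) = normSq E := by
    rw [← Complex.normSq_conj]
    congr 1
    simp only [map_sub, map_mul, Complex.conj_conj, hE]
    ring
  rw [hEeq]
  have hiff : ∀ z : ℂ, (normSq (2*a*z + b*(starRingEnd ℂ) z) ≠ normSq (b*z + 2*c*(starRingEnd ℂ) z))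
      ↔ D * normSq z + (E * z^2).re ≠ 0 := by
    intro z
    rw [ne_eq, ← sub_eq_zero, normSq_diff, ← hD, ← hE]
    constructor
    · intro h h'; exact h (by rw [h']; ring)
    · intro h h'; exact h (by linarith)
  constructor
  · intro hall
    by_contra hle
    push_neg at hle
    have hle' : D ^ 2 ≤ normSq E := hle
    by_cases hE0 : E = 0
    · have hD0 : D = 0 := by
        rw [hE0] at hle'; simp at hle'
        nlinarith [sq_nonneg D]
      have := (hiff 1).mp (hall 1 one_ne_zero)
      apply this
      rw [hD0, hE0]; simp
    · have hEpos : 0 < normSq E := Complex.normSq_pos.mpr hE0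
      set s : ℝ := Real.sqrt (normSq E - D^2) with hs
      set u : ℂ := -(D:ℂ) + (s:ℂ) * Complex.I with hu
      have hure : u.re = -D := by simp [hu]
      have hnsu : normSq u = normSq E := by
        rw [Complex.normSq_apply]
        simp [hu]
        nlinarith [Real.sq_sqrt (sub_nonneg.mpr hle')]
      set w : ℂ := u * (starRingEnd ℂ) E / (normSq E : ℂ) with hw
      have hnE0 : ((normSq E : ℝ) : ℂ) ≠ 0 := by
        simpa using ne_of_gt hEpos
      have hEw : E * w = u := by
        rw [hw, ← mul_div_assoc, div_eq_iff hnE0]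
        linear_combination u * Complex.mul_conj E
      have hnsw : normSq w = 1 := by
        have h1 : normSq E * normSq w = normSq E * 1 := by
          rw [← Complex.normSq_mul, hEw, hnsu, mul_one]
        exact mul_left_cancel₀ (ne_of_gt hEpos) h1
      set z : ℂ := w ^ (((2:ℕ):ℂ))⁻¹ with hz
      have hz2 : z ^ 2 = w := Complex.cpow_nat_inv_pow w two_ne_zero
      have hzne : z ≠ 0 := by
        intro h
        rw [h] at hz2
        rw [← hz2] at hnsw
        simp at hnsw
      have hnsz : normSq z = 1 := by
        have : normSq z ^ 2 = 1 := by
          rw [← map_pow Complex.normSq z 2, hz2, hnsw]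
        nlinarith [Complex.normSq_nonneg z]
      have := (hiff z).mp (hall z hzne)
      apply this
      rw [hz2, hnsz, hEw, hure]
      ring
  · intro hgt z hz
    rw [hiff z]
    intro h0
    have hNpos : 0 < normSq z := Complex.normSq_pos.mpr hz
    have hre : ((E * z^2).re)^2 ≤ normSq E * (normSq z)^2 := by
      have h1 : normSq (E * z^2) = normSq E * (normSq z)^2 := by
        rw [Complex.normSq_mul, map_pow Complex.normSq z 2]
      have h2 := Complex.normSq_apply (E * z^2)
      nlinarith [sq_nonneg ((E*z^2).im)]
    have hreq : (E * z^2).re = -(D * normSq z) := by linarith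
    rw [hreq] at hre
    nlinarith [mul_pos hNpos hNpos]


lemma hasfd (a b c z : ℂ) :
    HasFDerivAt (fun w : ℂ => a * (w * w) + b * (w * (starRingEnd ℂ) w)
        + c * ((starRingEnd ℂ) w * (starRingEnd ℂ) w))
      (a • (z • ContinuousLinearMap.id ℝ ℂ + z • ContinuousLinearMap.id ℝ ℂ)
        + b • (z • (Complex.conjCLE : ℂ →L[ℝ] ℂ)
            + ((starRingEnd ℂ) z) • ContinuousLinearMap.id ℝ ℂ)
        + c • (((starRingEnd ℂ) z) • (Complex.conjCLE : ℂ →L[ℝ] ℂ)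
            + ((starRingEnd ℂ) z) • (Complex.conjCLE : ℂ →L[ℝ] ℂ))) z := by
  exact ((((hasFDerivAt_id z).mul (hasFDerivAt_id z)).const_mul a).add
    (((hasFDerivAt_id z).mul Complex.conjCLE.hasFDerivAt).const_mul b)).add
    ((Complex.conjCLE.hasFDerivAt.mul Complex.conjCLE.hasFDerivAt).const_mul c)

lemma key_coe (a b c z : ℂ) :
    ⇑(fderiv ℝ (fun w : ℂ => a * w ^ 2 + b * w * (starRingEnd ℂ) w
          + c * ((starRingEnd ℂ) w) ^ 2) z)
      = fun h : ℂ => (2*a*z + b*(starRingEnd ℂ) z) * h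
          + (b*z + 2*c*(starRingEnd ℂ) z) * (starRingEnd ℂ) h := by
  have hfe : (fun w : ℂ => a * w ^ 2 + b * w * (starRingEnd ℂ) w
          + c * ((starRingEnd ℂ) w) ^ 2)
      = (fun w : ℂ => a * (w * w) + b * (w * (starRingEnd ℂ) w)
          + c * ((starRingEnd ℂ) w * (starRingEnd ℂ) w)) := by
    funext w; ring
  rw [hfe, (hasfd a b c z).fderiv]
  funext h
  simp only [ContinuousLinearMap.add_apply, ContinuousLinearMap.coe_smul',
    Pi.smul_apply, ContinuousLinearMap.coe_id', id_eq, smul_eq_mul,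
    ContinuousLinearEquiv.coe_coe, Complex.conjCLE_apply]
  ring

/-- the mixed polynomial `f(z) = az² + bzz̄ + cz̄²` on `ℂ` has no critical
point (as a map `ℝ² → ℝ²`) outside the origin iff `(|a|² − |c|²)² > |āb − cb̄|²`. -/
theorem quadratic_mixed_nondeg_iff (a b c : ℂ) :
    (∀ z : ℂ, z ≠ 0 → Function.Surjective
      ⇑(fderiv ℝ (fun w : ℂ => a * w ^ 2 + b * w * (starRingEnd ℂ) w
          + c * ((starRingEnd ℂ) w) ^ 2) z)) ↔
    (Complex.normSq a - Complex.normSq c) ^ 2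
      > Complex.normSq ((starRingEnd ℂ) a * b - c * (starRingEnd ℂ) b) := by
  
  have hstep : ∀ z : ℂ, (Function.Surjective
      ⇑(fderiv ℝ (fun w : ℂ => a * w ^ 2 + b * w * (starRingEnd ℂ) w
          + c * ((starRingEnd ℂ) w) ^ 2) z) ↔
      Complex.normSq (2*a*z + b*(starRingEnd ℂ) z)
        ≠ Complex.normSq (b*z + 2*c*(starRingEnd ℂ) z)) := by
    intro z
    rw [key_coe, surj_iff]
  constructor
  · intro H
    exact (scalar_iff a b c).mp fun z hz => (hstep z).mp (H z hz)
  · intro H z hz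
    exact (hstep z).mpr ((scalar_iff a b c).mpr H z hz)
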